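/- arXiv:1401.5653 — 4 statements merged into one kernel-verified Lean document; each statement's English description precedes it below -/
import Mathlib

section
/- For every positive integer n and every nonnegative integer k, the number of inversion tables e of length n with row(e) = k equals the number of permutations π of {1,...,n} with des(π) = k (the Eulerian number). -/
/-- The descent set of a permutation `π` of `{1,...,n}` (1-indexed):
`DES(π) = {i ∈ {1,...,n-1} : π_i > π_{i+1}}`.  Here `π_i` is `π ⟨i-1, _⟩`
since `Fin n` is 0-indexed. -/
def permDES (n : ℕ) (π : Equiv.Perm (Fin n)) : Finset ℕ :=
  (Finset.Ico 1 n).filter fun i =>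
    ∃ h : i < n, ∃ h' : i - 1 < n, π ⟨i, h⟩ < π ⟨i - 1, h'⟩

/-- `des(π)`, the number of descents of `π`. -/
def permDes (n : ℕ) (π : Equiv.Perm (Fin n)) : ℕ := (permDES n π).card

/-- `ides(π) = des(π⁻¹)`. -/
def permIdes (n : ℕ) (π : Equiv.Perm (Fin n)) : ℕ := permDes n π⁻¹

/-- `maj(π)`, the sum of the elements of `DES(π)`. -/
def permMaj (n : ℕ) (π : Equiv.Perm (Fin n)) : ℕ := ∑ i ∈ permDES n π, i

/-- An inversion table of length `n`: a sequence `e_1 … e_n` with `1 ≤ e_i ≤ i`.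
The entry `e_i` (for `1 ≤ i ≤ n`) is `e.1 ⟨i-1, _⟩`. -/
abbrev InvTable (n : ℕ) :=
  {e : Fin n → Fin (n + 1) // ∀ i : Fin n, 1 ≤ (e i : ℕ) ∧ (e i : ℕ) ≤ (i : ℕ) + 1}

/-- The ascent set `ASC(e) = {i ∈ {1,...,n-1} : e_i < e_{i+1}}`. -/
def invASC (n : ℕ) (e : InvTable n) : Finset ℕ :=
  (Finset.Ico 1 n).filter fun i =>
    ∃ h : i < n, ∃ h' : i - 1 < n, (e.1 ⟨i - 1, h'⟩ : ℕ) < (e.1 ⟨i, h⟩ : ℕ)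

/-- `asc(e)`, the number of ascents of `e`. -/
def invAsc (n : ℕ) (e : InvTable n) : ℕ := (invASC n e).card

/-- `ROW(e) = {e_i : 1 ≤ i ≤ n} \ {1}`. -/
def invROW (n : ℕ) (e : InvTable n) : Finset ℕ :=
  (Finset.image (fun i : Fin n => (e.1 i : ℕ)) Finset.univ) \ {1}

/-- `row(e) = #ROW(e)`. -/
def invRow (n : ℕ) (e : InvTable n) : ℕ := (invROW n e).card

/-- `amaj(e)`, the sum of the elements of `ASC(e)`. -/
def invAmaj (n : ℕ) (e : InvTable n) : ℕ := ∑ i ∈ invASC n e, i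


private def EulA : ℕ → ℕ → ℕ
  | 0, 0 => 1
  | 0, _+1 => 0
  | n+1, 0 => EulA n 0
  | n+1, k+1 => (k+2) * EulA n (k+1) + (n-k) * EulA n k

private lemma count_step {α β : Type*} [Fintype α] [Fintype β] {n : ℕ}
    (F : α → Fin (n+1) → β)
    (hF : Function.Bijective (fun x : α × Fin (n+1) => F x.1 x.2))
    (s : α → ℕ) (t : β → ℕ) [DecidableEq β]
    (hstat : ∀ a p, t (F a p) = s a ∨ t (F a p) = s a + 1)
    (hcard : ∀ a, (Finset.univ.filter fun p => t (F a p) = s a).card = s a + 1)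
    (k : ℕ) :
    (Finset.univ.filter fun b => t b = k).card =
      (k+1) * (Finset.univ.filter fun a => s a = k).card +
      (n + 1 - k) * (Finset.univ.filter fun a => s a + 1 = k).card := by
  classical
  -- transfer to the product side
  have h1 : (Finset.univ.filter fun b => t b = k).card
      = (Finset.univ.filter fun x : α × Fin (n+1) => t (F x.1 x.2) = k).card := by
    refine (Finset.card_bij (fun x _ => F x.1 x.2) ?_ ?_ ?_).symm
    · intro x hx
      simp only [Finset.mem_filter, Finset.mem_univ, true_and] at hx ⊢
      exact hx
    · intro x hx y hy hxy
      exact hF.1 hxy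
    · intro b hb
      obtain ⟨x, hx⟩ := hF.2 b
      refine ⟨x, ?_, hx⟩
      simp only [Finset.mem_filter, Finset.mem_univ, true_and] at hb ⊢
      rw [show F x.1 x.2 = b from hx]; exact hb
  -- fiberwise
  have h2 : (Finset.univ.filter fun x : α × Fin (n+1) => t (F x.1 x.2) = k).card
      = ∑ a : α, (Finset.univ.filter fun p : Fin (n+1) => t (F a p) = k).card := by
    rw [Finset.card_eq_sum_card_fiberwise (f := Prod.fst) (t := Finset.univ) (fun x _ => Finset.mem_univ _)]
    refine Finset.sum_congr rfl fun a _ => ?_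
    refine Finset.card_nbij' Prod.snd (fun p => (a, p)) ?_ ?_ ?_ ?_
    · intro x hx
      simp only [Finset.mem_coe, Finset.mem_filter, Finset.mem_univ, true_and] at hx ⊢
      rw [← hx.2]; exact hx.1
    · intro p hp
      simp only [Finset.mem_coe, Finset.mem_filter, Finset.mem_univ, true_and] at hp ⊢
      exact ⟨hp, trivial⟩
    · intro x hx
      simp only [Finset.mem_coe, Finset.mem_filter, Finset.mem_univ, true_and] at hx
      exact Prod.ext hx.2.symm rfl
    · intro p _
      rfl
  -- per-fiber count
  have h3 : ∀ a : α, (Finset.univ.filter fun p : Fin (n+1) => t (F a p) = k).card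
      = (if s a = k then k + 1 else 0) + (if s a + 1 = k then n + 1 - k else 0) := by
    intro a
    by_cases hk : s a = k
    · rw [if_pos hk, if_neg (by omega)]
      rw [← hk]
      simpa using hcard a
    · rw [if_neg hk]
      by_cases hk' : s a + 1 = k
      · rw [if_pos hk']
        have hcompl : (Finset.univ.filter fun p : Fin (n+1) => t (F a p) = k)
            = Finset.univ.filter fun p : Fin (n+1) => ¬ (t (F a p) = s a) := by
          ext p
          simp only [Finset.mem_filter, Finset.mem_univ, true_and]
          rcases hstat a p with h | h <;> constructor <;> intro hh <;> omega
        rw [hcompl, Finset.filter_not, Finset.card_sdiff_of_subset (Finset.filter_subset _ _),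
          hcard a, Finset.card_univ, Fintype.card_fin]
        omega
      · rw [if_neg hk']
        simp only [zero_add, Finset.card_eq_zero, Finset.filter_eq_empty_iff]
        intro p _
        rcases hstat a p with h | h <;> omega
  rw [h1, h2]
  calc ∑ a : α, (Finset.univ.filter fun p : Fin (n+1) => t (F a p) = k).card
      = ∑ a : α, ((if s a = k then k + 1 else 0) + (if s a + 1 = k then n + 1 - k else 0)) :=
        Finset.sum_congr rfl fun a _ => h3 a
    _ = (∑ a : α, if s a = k then k + 1 else 0) + ∑ a : α, (if s a + 1 = k then n + 1 - k else 0) :=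
        Finset.sum_add_distrib
    _ = _ := by
        rw [← Finset.sum_filter, ← Finset.sum_filter, Finset.sum_const, Finset.sum_const,
          smul_eq_mul, smul_eq_mul, mul_comm ((Finset.filter (fun a => s a = k) Finset.univ).card),
          mul_comm ((Finset.filter (fun a => s a + 1 = k) Finset.univ).card)]


/-- Extend an inversion table of length `n` by a last entry `v+1 ∈ {1,…,n+1}`. -/
def extInv (n : ℕ) (e : InvTable n) (v : Fin (n+1)) : InvTable (n+1) :=
  ⟨fun i => if h : (i : ℕ) < n then (e.1 ⟨i, h⟩).castSucc else v.succ, by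
    intro i
    by_cases h : (i : ℕ) < n
    · simp only [dif_pos h, Fin.coe_castSucc]
      exact (e.2 ⟨i, h⟩)
    · simp only [dif_neg h, Fin.val_succ]
      have hi : (i : ℕ) = n := by omega
      have := v.isLt
      omega⟩

lemma extInv_lt (n : ℕ) (e : InvTable n) (v : Fin (n+1)) (i : Fin (n+1)) (h : (i : ℕ) < n) :
    ((extInv n e v).1 i : ℕ) = (e.1 ⟨i, h⟩ : ℕ) := by
  simp [extInv, dif_pos h]

lemma extInv_last (n : ℕ) (e : InvTable n) (v : Fin (n+1)) (i : Fin (n+1)) (h : ¬ (i : ℕ) < n) :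
    ((extInv n e v).1 i : ℕ) = (v : ℕ) + 1 := by
  simp [extInv, dif_neg h]

/-- Restrict an inversion table of length `n+1` to length `n`, plus the last entry. -/
def resInv (n : ℕ) (e : InvTable (n+1)) : InvTable n × Fin (n+1) :=
  (⟨fun i => ⟨(e.1 i.castSucc : ℕ), by
      have h := (e.2 i.castSucc).2
      have := i.isLt
      simp only [Fin.coe_castSucc] at h
      omega⟩, by
    intro i
    have h := e.2 i.castSucc
    simpa using h⟩,
   ⟨(e.1 (Fin.last n) : ℕ) - 1, by
      have h := (e.2 (Fin.last n)).2
      simp only [Fin.val_last] at h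
      omega⟩)

lemma extInv_bij (n : ℕ) :
    Function.Bijective (fun x : InvTable n × Fin (n+1) => extInv n x.1 x.2) := by
  have hleft : Function.LeftInverse (resInv n) (fun x : InvTable n × Fin (n+1) => extInv n x.1 x.2) := by
    rintro ⟨e, v⟩
    refine Prod.ext (Subtype.ext (funext fun i => ?_)) ?_
    · apply Fin.ext
      show ((extInv n e v).1 i.castSucc : ℕ) = _
      rw [extInv_lt n e v i.castSucc (by simp)]
      congr 1
      all_goals exact Fin.ext (by simp)
    · apply Fin.ext
      show ((extInv n e v).1 (Fin.last n) : ℕ) - 1 = (v : ℕ)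
      rw [extInv_last n e v (Fin.last n) (by simp)]
      omega
  have hright : Function.RightInverse (resInv n) (fun x : InvTable n × Fin (n+1) => extInv n x.1 x.2) := by
    intro e
    apply Subtype.ext
    funext i
    apply Fin.ext
    by_cases h : (i : ℕ) < n
    · rw [extInv_lt n _ _ i h]
      show ((e.1 (Fin.castSucc ⟨(i : ℕ), h⟩) : ℕ)) = _
      congr 1
    · rw [extInv_last n _ _ i h]
      show ((e.1 (Fin.last n) : ℕ) - 1) + 1 = (e.1 i : ℕ)
      have hi : i = Fin.last n := by
        apply Fin.ext; simp only [Fin.val_last]; omega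
      subst hi
      have := (e.2 (Fin.last n)).1
      omega
  exact ⟨hleft.injective, hright.surjective⟩

lemma invROW_ext (n : ℕ) (e : InvTable n) (v : Fin (n+1)) :
    invROW (n+1) (extInv n e v) = insert ((v : ℕ) + 1) (Finset.image (fun i : Fin n => (e.1 i : ℕ)) Finset.univ) \ {1} := by
  unfold invROW
  congr 1
  ext m
  simp only [Finset.mem_image, Finset.mem_univ, true_and, Finset.mem_insert]
  constructor
  · rintro ⟨i, rfl⟩
    by_cases h : (i : ℕ) < n
    · exact Or.inr ⟨⟨i, h⟩, (extInv_lt n e v i h).symm⟩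
    · exact Or.inl (extInv_last n e v i h)
  · rintro (rfl | ⟨i, rfl⟩)
    · exact ⟨Fin.last n, extInv_last n e v (Fin.last n) (by simp)⟩
    · refine ⟨i.castSucc, ?_⟩
      rw [extInv_lt n e v i.castSucc (by simp)]
      congr 1
      all_goals exact Fin.ext (by simp)

lemma mem_invROW_bounds (n : ℕ) (e : InvTable n) (m : ℕ) (hm : m ∈ invROW n e) :
    2 ≤ m ∧ m ≤ n := by
  unfold invROW at hm
  simp only [Finset.mem_sdiff, Finset.mem_image, Finset.mem_univ, true_and,
    Finset.mem_singleton] at hm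
  obtain ⟨⟨i, rfl⟩, h1⟩ := hm
  have h2 := (e.2 i).1
  have h3 := (e.2 i).2
  have := i.isLt
  omega

lemma invRow_ext (n : ℕ) (e : InvTable n) (v : Fin (n+1)) :
    invRow (n+1) (extInv n e v) =
      if (v : ℕ) = 0 ∨ (v : ℕ) + 1 ∈ invROW n e then invRow n e else invRow n e + 1 := by
  have key := invROW_ext n e v
  unfold invRow
  rw [key]
  set img := Finset.image (fun i : Fin n => (e.1 i : ℕ)) Finset.univ with himg
  have hrow : invROW n e = img \ {1} := rfl
  by_cases h0 : (v : ℕ) = 0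
  · rw [if_pos (Or.inl h0), hrow]
    congr 1
    rw [h0]
    ext m
    simp only [Finset.mem_sdiff, Finset.mem_insert, Finset.mem_singleton]
    constructor
    · rintro ⟨(rfl | hm), h1⟩
      · omega
      · exact ⟨hm, h1⟩
    · rintro ⟨hm, h1⟩
      exact ⟨Or.inr hm, h1⟩
  · by_cases hmem : (v : ℕ) + 1 ∈ invROW n e
    · rw [if_pos (Or.inr hmem), hrow]
      congr 1
      rw [hrow] at hmem
      simp only [Finset.mem_sdiff, Finset.mem_singleton] at hmem
      rw [Finset.insert_eq_self.mpr hmem.1]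
    · rw [if_neg (by tauto), hrow]
      have h1 : (v : ℕ) + 1 ≠ 1 := by omega
      have heq : insert ((v : ℕ) + 1) img \ {1} = insert ((v : ℕ) + 1) (img \ {1}) := by
        ext m
        simp only [Finset.mem_sdiff, Finset.mem_insert, Finset.mem_singleton]
        constructor
        · rintro ⟨(rfl | hm), hne⟩
          · exact Or.inl rfl
          · exact Or.inr ⟨hm, hne⟩
        · rintro (rfl | ⟨hm, hne⟩)
          · exact ⟨Or.inl rfl, h1⟩
          · exact ⟨Or.inr hm, hne⟩
      rw [heq, Finset.card_insert_of_notMem (by rw [← hrow]; exact hmem)]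

lemma invRow_kept_card (n : ℕ) (e : InvTable n) :
    (Finset.univ.filter fun v : Fin (n+1) => (v : ℕ) = 0 ∨ (v : ℕ) + 1 ∈ invROW n e).card
      = invRow n e + 1 := by
  have h1 : (1 : ℕ) ∉ invROW n e := fun h => by have := mem_invROW_bounds n e 1 h; omega
  have key : (Finset.univ.filter fun v : Fin (n+1) => (v : ℕ) = 0 ∨ (v : ℕ) + 1 ∈ invROW n e).card
      = (insert 1 (invROW n e)).card := by
    refine Finset.card_nbij' (fun v => (v : ℕ) + 1)
      (fun m => ⟨min (m - 1) n, by omega⟩) ?_ ?_ ?_ ?_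
    · intro v hv
      simp only [Finset.mem_coe, Finset.mem_filter, Finset.mem_univ, true_and] at hv
      rcases hv with h | h
      · simp [h]
      · exact Finset.mem_insert_of_mem h
    · intro m hm
      simp only [Finset.mem_coe, Finset.mem_filter, Finset.mem_univ, true_and]
      rcases Finset.mem_insert.mp hm with rfl | h
      · left; simp
      · right
        have hb := mem_invROW_bounds n e m h
        have : min (m - 1) n = m - 1 := by omega
        simp only [this]
        have : m - 1 + 1 = m := by omega
        rw [this]
        exact h
    · intro v hv
      apply Fin.ext
      have := v.isLt
      show min ((v : ℕ) + 1 - 1) n = (v : ℕ)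
      omega
    · intro m hm
      show min (m - 1) n + 1 = m
      rcases Finset.mem_insert.mp hm with rfl | h
      · omega
      · have := mem_invROW_bounds n e m h; omega
  rw [key, Finset.card_insert_of_notMem h1, invRow, add_comm]

/-- Insert the largest value `n` (as `Fin.last n`) at position `p` into the word of `σ`. -/
def insPerm (n : ℕ) (σ : Equiv.Perm (Fin n)) (p : Fin (n+1)) : Equiv.Perm (Fin (n+1)) :=
  (finSuccEquiv' p).trans ((σ.optionCongr).trans finSuccEquivLast.symm)

lemma insPerm_at (n : ℕ) (σ : Equiv.Perm (Fin n)) (p : Fin (n+1)) :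
    insPerm n σ p p = Fin.last n := by
  simp [insPerm]

lemma insPerm_succAbove (n : ℕ) (σ : Equiv.Perm (Fin n)) (p : Fin (n+1)) (j : Fin n) :
    insPerm n σ p (p.succAbove j) = (σ j).castSucc := by
  simp [insPerm]

lemma insPerm_val_lt (n : ℕ) (σ : Equiv.Perm (Fin n)) (p : Fin (n+1)) (i : ℕ)
    (hi : i < (p : ℕ)) :
    insPerm n σ p ⟨i, by have := p.isLt; omega⟩ = (σ ⟨i, by have := p.isLt; omega⟩).castSucc := by
  have hin : i < n := by have := p.isLt; omega
  have : (⟨i, by omega⟩ : Fin (n+1)) = p.succAbove ⟨i, hin⟩ := by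
    rw [Fin.succAbove_of_castSucc_lt]
    · rfl
    · exact hi
  rw [this, insPerm_succAbove]

lemma insPerm_val_gt (n : ℕ) (σ : Equiv.Perm (Fin n)) (p : Fin (n+1)) (i : ℕ)
    (hgt : (p : ℕ) < i) (hi : i < n + 1) :
    insPerm n σ p ⟨i, hi⟩ = (σ ⟨i - 1, by omega⟩).castSucc := by
  have : (⟨i, hi⟩ : Fin (n+1)) = p.succAbove ⟨i - 1, by omega⟩ := by
    rw [Fin.succAbove_of_le_castSucc]
    · apply Fin.ext
      simp only [Fin.val_succ]
      omega
    · rw [Fin.le_def]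
      simp only [Fin.coe_castSucc]
      omega
  rw [this, insPerm_succAbove]

lemma insPerm_bij (n : ℕ) :
    Function.Bijective (fun x : Equiv.Perm (Fin n) × Fin (n+1) => insPerm n x.1 x.2) := by
  rw [Fintype.bijective_iff_injective_and_card]
  constructor
  · rintro ⟨σ, p⟩ ⟨σ', p'⟩ h
    simp only at h
    have hp : p = p' := by
      by_contra hne
      obtain ⟨j, hj⟩ := Fin.exists_succAbove_eq (Ne.symm hne)
      have h1 : insPerm n σ p p' = Fin.last n := by
        rw [h, insPerm_at]
      rw [← hj, insPerm_succAbove] at h1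
      exact absurd h1 (Fin.ne_of_lt (Fin.castSucc_lt_last _))
    subst hp
    have hσ : σ = σ' := by
      apply Equiv.ext
      intro j
      have := congrArg (fun π : Equiv.Perm (Fin (n+1)) => π (p.succAbove j)) h
      simp only [insPerm_succAbove] at this
      exact Fin.castSucc_injective n this
    rw [hσ]
  · simp [Fintype.card_perm, Nat.factorial_succ, mul_comm]

/-- Membership in `permDES` in convenient form. -/
lemma mem_permDES {n : ℕ} {σ : Equiv.Perm (Fin n)} {i : ℕ} (h1 : 1 ≤ i) (h : i < n) :
    i ∈ permDES n σ ↔ σ ⟨i, h⟩ < σ ⟨i - 1, by omega⟩ := by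
  unfold permDES
  simp only [Finset.mem_filter, Finset.mem_Ico]
  constructor
  · rintro ⟨-, h2, h3, hlt⟩
    exact hlt
  · intro hlt
    exact ⟨⟨h1, h⟩, h, by omega, hlt⟩

lemma not_mem_permDES_of_ge {n : ℕ} {σ : Equiv.Perm (Fin n)} {i : ℕ} (h : ¬ (1 ≤ i ∧ i < n)) :
    i ∉ permDES n σ := by
  unfold permDES
  simp only [Finset.mem_filter, Finset.mem_Ico]
  tauto

lemma mem_permDES' {n : ℕ} {σ : Equiv.Perm (Fin n)} {i : ℕ} (h1 : 1 ≤ i) (h : i < n) :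
    i ∈ permDES n σ ↔ (σ ⟨i, h⟩ : ℕ) < (σ ⟨i - 1, by omega⟩ : ℕ) := by
  rw [mem_permDES h1 h, Fin.lt_def]

lemma insPerm_coe_lt (n : ℕ) (σ : Equiv.Perm (Fin n)) (p : Fin (n+1)) (i : ℕ)
    (hlt : i < (p : ℕ)) (hi : i < n + 1) (hin : i < n) :
    ((insPerm n σ p ⟨i, hi⟩ : Fin (n+1)) : ℕ) = (σ ⟨i, hin⟩ : ℕ) := by
  rw [insPerm_val_lt n σ p i hlt]
  simp

lemma insPerm_coe_eq (n : ℕ) (σ : Equiv.Perm (Fin n)) (p : Fin (n+1)) (i : ℕ)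
    (heq : i = (p : ℕ)) (hi : i < n + 1) :
    ((insPerm n σ p ⟨i, hi⟩ : Fin (n+1)) : ℕ) = n := by
  have : (⟨i, hi⟩ : Fin (n+1)) = p := Fin.ext heq
  rw [this, insPerm_at]
  simp

lemma insPerm_coe_gt (n : ℕ) (σ : Equiv.Perm (Fin n)) (p : Fin (n+1)) (i : ℕ)
    (hgt : (p : ℕ) < i) (hi : i < n + 1) (hin : i - 1 < n) :
    ((insPerm n σ p ⟨i, hi⟩ : Fin (n+1)) : ℕ) = (σ ⟨i - 1, hin⟩ : ℕ) := by
  rw [insPerm_val_gt n σ p i hgt hi]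
  simp

lemma permDES_insPerm_last (n : ℕ) (σ : Equiv.Perm (Fin n)) (p : Fin (n+1))
    (hp : (p : ℕ) = n) :
    permDES (n+1) (insPerm n σ p) = permDES n σ := by
  ext i
  by_cases hi : 1 ≤ i ∧ i < n
  · rw [mem_permDES' hi.1 (by omega : i < n + 1), mem_permDES' hi.1 hi.2,
      insPerm_coe_lt n σ p i (by omega) (by omega) hi.2,
      insPerm_coe_lt n σ p (i-1) (by omega) (by omega) (by omega)]
  · by_cases hi2 : 1 ≤ i ∧ i = n
    · have h0 : 1 ≤ i := hi2.1
      rw [mem_permDES' h0 (by omega : i < n + 1)]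
      have hfalse : ¬ ((σ ⟨i - 1, by omega⟩ : Fin n) : ℕ) > n := by
        have := (σ ⟨i - 1, by omega⟩).isLt; omega
      rw [insPerm_coe_eq n σ p i (by omega) (by omega)]
      simp only [iff_iff_implies_and_implies]
      constructor
      · intro hlt
        exfalso
        have := (σ ⟨i - 1, by omega⟩).isLt
        omega
      · intro hmem
        exact absurd hmem (not_mem_permDES_of_ge (by omega))
    · constructor
      · intro hmem
        by_cases h3 : 1 ≤ i ∧ i < n + 1
        · omega
        · exact absurd hmem (not_mem_permDES_of_ge (by omega))
      · intro hmem
        exact absurd hmem (not_mem_permDES_of_ge (by omega))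

lemma mem_permDES_insPerm (n : ℕ) (σ : Equiv.Perm (Fin n)) (p : Fin (n+1))
    (hq : (p : ℕ) < n) (i : ℕ) :
    i ∈ permDES (n+1) (insPerm n σ p) ↔
      (i < (p : ℕ) ∧ i ∈ permDES n σ) ∨ i = (p : ℕ) + 1 ∨
        ((p : ℕ) + 2 ≤ i ∧ i - 1 ∈ permDES n σ) := by
  set q := (p : ℕ) with hqdef
  rcases Nat.lt_or_ge i 1 with h0 | h1
  · -- i = 0
    have hi0 : i = 0 := by omega
    subst hi0
    constructor
    · intro hmem; exact absurd hmem (not_mem_permDES_of_ge (by omega))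
    · rintro (⟨-, hmem⟩ | h | ⟨h, -⟩)
      · exact absurd hmem (not_mem_permDES_of_ge (by omega))
      · omega
      · omega
  · rcases Nat.lt_or_ge i q with hlt | hge
    · -- 1 ≤ i < q
      rw [mem_permDES' h1 (by omega : i < n + 1),
        insPerm_coe_lt n σ p i (by omega) (by omega) (by omega),
        insPerm_coe_lt n σ p (i-1) (by omega) (by omega) (by omega),
        ← mem_permDES' h1 (by omega : i < n)]
      constructor
      · intro h; exact Or.inl ⟨hlt, h⟩
      · rintro (⟨-, h⟩ | h | ⟨h, -⟩)
        · exact h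
        · omega
        · omega
    · rcases Nat.eq_or_lt_of_le hge with heq | hgt
      · -- i = q
        have hiq : i = q := heq.symm
        rw [mem_permDES' h1 (by omega : i < n + 1),
          insPerm_coe_eq n σ p i (by omega) (by omega),
          insPerm_coe_lt n σ p (i-1) (by omega) (by omega) (by omega)]
        constructor
        · intro h
          have := (σ ⟨i - 1, by omega⟩).isLt
          omega
        · rintro (⟨h, -⟩ | h | ⟨h, -⟩) <;> omega
      · rcases Nat.eq_or_lt_of_le hgt with heq2 | hgt2
        · -- i = q + 1
          have hiq : i = q + 1 := heq2.symm
          rw [mem_permDES' h1 (by omega : i < n + 1),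
            insPerm_coe_gt n σ p i (by omega) (by omega) (by omega),
            insPerm_coe_eq n σ p (i-1) (by omega) (by omega)]
          have := (σ ⟨i - 1, by omega⟩).isLt
          constructor
          · intro _; exact Or.inr (Or.inl hiq)
          · intro _; omega
        · -- q + 2 ≤ i
          rcases Nat.lt_or_ge i (n + 1) with hin | hout
          · rw [mem_permDES' h1 hin,
              insPerm_coe_gt n σ p i (by omega) (by omega) (by omega),
              insPerm_coe_gt n σ p (i-1) (by omega) (by omega) (by omega)]
            have hii : i - 1 - 1 = i - 2 := by omega
            rw [← mem_permDES' (by omega : 1 ≤ i - 1) (by omega : i - 1 < n)]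
            constructor
            · intro h
              exact Or.inr (Or.inr ⟨by omega, h⟩)
            · rintro (⟨h, -⟩ | h | ⟨-, h⟩)
              · omega
              · omega
              · exact h
          · constructor
            · intro hmem; exact absurd hmem (not_mem_permDES_of_ge (by omega))
            · rintro (⟨h, -⟩ | h | ⟨-, h⟩)
              · omega
              · omega
              · exact absurd h (not_mem_permDES_of_ge (by omega))

lemma permDes_insPerm_card (n : ℕ) (σ : Equiv.Perm (Fin n)) (p : Fin (n+1))
    (hq : (p : ℕ) < n) :
    permDes (n+1) (insPerm n σ p) = ((permDES n σ).erase (p : ℕ)).card + 1 := by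
  set q := (p : ℕ) with hqdef
  have hmem1 : q + 1 ∈ permDES (n+1) (insPerm n σ p) :=
    (mem_permDES_insPerm n σ p hq (q+1)).mpr (Or.inr (Or.inl rfl))
  unfold permDes
  rw [← Finset.card_erase_add_one hmem1]
  congr 1
  refine Finset.card_nbij' (fun i => if i < q then i else i - 1)
    (fun j => if j < q then j else j + 1) ?_ ?_ ?_ ?_
  · intro i hi
    dsimp only
    rw [Finset.mem_coe, Finset.mem_erase] at hi
    obtain ⟨hne, hmem⟩ := hi
    rw [mem_permDES_insPerm n σ p hq] at hmem
    rcases hmem with ⟨hlt, hD⟩ | h | ⟨hge, hD⟩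
    · rw [if_pos hlt]
      exact Finset.mem_erase.mpr ⟨by omega, hD⟩
    · omega
    · rw [if_neg (by omega)]
      exact Finset.mem_erase.mpr ⟨by omega, hD⟩
  · intro j hj
    dsimp only
    rw [Finset.mem_coe, Finset.mem_erase] at hj
    obtain ⟨hne, hD⟩ := hj
    have hjb : 1 ≤ j ∧ j < n := by
      by_contra h
      exact absurd hD (not_mem_permDES_of_ge h)
    by_cases hlt : j < q
    · rw [if_pos hlt]
      refine Finset.mem_erase.mpr ⟨by omega, ?_⟩
      rw [mem_permDES_insPerm n σ p hq]
      exact Or.inl ⟨hlt, hD⟩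
    · rw [if_neg hlt]
      refine Finset.mem_erase.mpr ⟨by omega, ?_⟩
      rw [mem_permDES_insPerm n σ p hq]
      refine Or.inr (Or.inr ⟨by omega, ?_⟩)
      simpa using hD
  · intro i hi
    dsimp only
    rw [Finset.mem_coe, Finset.mem_erase] at hi
    obtain ⟨hne, hmem⟩ := hi
    rw [mem_permDES_insPerm n σ p hq] at hmem
    rcases hmem with ⟨hlt, hD⟩ | h | ⟨hge, hD⟩
    · rw [if_pos hlt, if_pos hlt]
    · omega
    · rw [if_neg (show ¬ i < q by omega), if_neg (show ¬ i - 1 < q by omega)]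
      omega
  · intro j hj
    dsimp only
    rw [Finset.mem_coe, Finset.mem_erase] at hj
    obtain ⟨hne, hD⟩ := hj
    have hjb : 1 ≤ j ∧ j < n := by
      by_contra h
      exact absurd hD (not_mem_permDES_of_ge h)
    by_cases hlt : j < q
    · rw [if_pos hlt, if_pos hlt]
    · rw [if_neg hlt, if_neg (by omega)]
      omega

lemma permDes_insPerm (n : ℕ) (σ : Equiv.Perm (Fin n)) (p : Fin (n+1)) :
    permDes (n+1) (insPerm n σ p)
      = if (p : ℕ) = n ∨ (p : ℕ) ∈ permDES n σ then permDes n σ else permDes n σ + 1 := by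
  by_cases hp : (p : ℕ) = n
  · rw [if_pos (Or.inl hp)]
    unfold permDes
    rw [permDES_insPerm_last n σ p hp]
  · have hq : (p : ℕ) < n := by have := p.isLt; omega
    rw [permDes_insPerm_card n σ p hq]
    by_cases hmem : (p : ℕ) ∈ permDES n σ
    · rw [if_pos (Or.inr hmem), Finset.card_erase_of_mem hmem]
      unfold permDes
      have : 1 ≤ (permDES n σ).card := Finset.card_pos.mpr ⟨_, hmem⟩
      omega
    · rw [if_neg (by tauto), Finset.erase_eq_of_notMem hmem]
      rfl

lemma permDes_kept_card (n : ℕ) (σ : Equiv.Perm (Fin n)) :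
    (Finset.univ.filter fun p : Fin (n+1) =>
      permDes (n+1) (insPerm n σ p) = permDes n σ).card = permDes n σ + 1 := by
  have hset : (Finset.univ.filter fun p : Fin (n+1) =>
      permDes (n+1) (insPerm n σ p) = permDes n σ)
      = Finset.univ.filter fun p : Fin (n+1) => (p : ℕ) = n ∨ (p : ℕ) ∈ permDES n σ := by
    ext p
    simp only [Finset.mem_filter, Finset.mem_univ, true_and]
    rw [permDes_insPerm n σ p]
    by_cases h : (p : ℕ) = n ∨ (p : ℕ) ∈ permDES n σ
    · rw [if_pos h]; simp [h]
    · rw [if_neg h]; simp [h]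
  rw [hset]
  have hn : n ∉ permDES n σ := not_mem_permDES_of_ge (by omega)
  have : (Finset.univ.filter fun p : Fin (n+1) => (p : ℕ) = n ∨ (p : ℕ) ∈ permDES n σ).card
      = (insert n (permDES n σ)).card := by
    refine Finset.card_nbij' (fun p => (p : ℕ)) (fun m => ⟨min m n, by omega⟩) ?_ ?_ ?_ ?_
    · intro p hp
      dsimp only
      simp only [Finset.mem_coe, Finset.mem_filter, Finset.mem_univ, true_and] at hp
      rcases hp with h | h
      · rw [h]; exact Finset.mem_insert_self _ _
      · exact Finset.mem_insert_of_mem h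
    · intro m hm
      simp only [Finset.mem_coe, Finset.mem_filter, Finset.mem_univ, true_and]
      rcases Finset.mem_insert.mp hm with rfl | h
      · left; simp
      · have hb : 1 ≤ m ∧ m < n := by
          by_contra hc
          exact absurd h (not_mem_permDES_of_ge hc)
        right
        have : min m n = m := by omega
        rw [this]
        exact h
    · intro p hp
      apply Fin.ext
      have := p.isLt
      show min ((p : ℕ)) n = (p : ℕ)
      simp only [Finset.mem_coe, Finset.mem_filter, Finset.mem_univ, true_and] at hp
      rcases hp with h | h
      · omega
      · have hb : 1 ≤ (p : ℕ) ∧ (p : ℕ) < n := by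
          by_contra hc
          exact absurd h (not_mem_permDES_of_ge hc)
        omega
    · intro m hm
      show min m n = m
      rcases Finset.mem_insert.mp hm with rfl | h
      · omega
      · have hb : 1 ≤ m ∧ m < n := by
          by_contra hc
          exact absurd h (not_mem_permDES_of_ge hc)
        omega
  rw [this, Finset.card_insert_of_notMem hn, permDes, add_comm]

private lemma eq_eulA (c : ℕ → ℕ → ℕ) (h00 : c 0 0 = 1) (h0 : ∀ k, c 0 (k+1) = 0)
    (hs0 : ∀ n, c (n+1) 0 = c n 0)
    (hs : ∀ n k, c (n+1) (k+1) = (k+2) * c n (k+1) + (n-k) * c n k) :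
    ∀ n k, c n k = EulA n k := by
  intro n
  induction n with
  | zero =>
    intro k
    cases k with
    | zero => rw [h00]; rfl
    | succ k => rw [h0]; rfl
  | succ n ih =>
    intro k
    cases k with
    | zero => rw [hs0, ih 0]; rfl
    | succ k => rw [hs, ih, ih]; rfl

private lemma invRow_le (n : ℕ) (e : InvTable n) : invRow n e ≤ n := by
  unfold invRow
  calc (invROW n e).card ≤ (Finset.image (fun i : Fin n => (e.1 i : ℕ)) Finset.univ).card :=
        Finset.card_le_card (Finset.sdiff_subset)
    _ ≤ (Finset.univ : Finset (Fin n)).card := Finset.card_image_le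
    _ = n := by simp

private lemma inv_count (n k : ℕ) :
    (Finset.univ.filter (fun e : InvTable n => invRow n e = k)).card = EulA n k := by
  refine eq_eulA (fun n k => (Finset.univ.filter (fun e : InvTable n => invRow n e = k)).card)
    ?_ ?_ ?_ ?_ n k
  · -- base: exactly one inversion table of length 0, with row 0
    have h1 : ∀ e : InvTable 0, invRow 0 e = 0 := by
      intro e
      unfold invRow invROW
      simp
    have : (Finset.univ.filter (fun e : InvTable 0 => invRow 0 e = 0)) = Finset.univ := by
      ext e; simp [h1 e]
    rw [this, Finset.card_univ]
    exact Fintype.card_eq_one_iff.mpr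
      ⟨⟨fun i => i.elim0, fun i => i.elim0⟩, fun e => Subtype.ext (funext fun i => i.elim0)⟩
  · intro k
    have h1 : ∀ e : InvTable 0, invRow 0 e = 0 := by
      intro e
      unfold invRow invROW
      simp
    rw [Finset.card_eq_zero, Finset.filter_eq_empty_iff]
    intro e _
    rw [h1 e]
    omega
  · intro n
    have := count_step (extInv n) (extInv_bij n) (invRow n) (invRow (n+1))
      (fun e v => by rw [invRow_ext]; split <;> [left; right] <;> rfl)
      (fun e => by
        have hset : (Finset.univ.filter fun v : Fin (n+1) =>
            invRow (n+1) (extInv n e v) = invRow n e)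
            = Finset.univ.filter fun v : Fin (n+1) => (v : ℕ) = 0 ∨ (v : ℕ) + 1 ∈ invROW n e := by
          ext v
          simp only [Finset.mem_filter, Finset.mem_univ, true_and]
          rw [invRow_ext]
          split <;> rename_i h
          · exact iff_of_true rfl h
          · exact iff_of_false (by omega) h
        rw [hset, invRow_kept_card]) 0
    rw [this]
    have h2 : (Finset.univ.filter fun e : InvTable n => invRow n e + 1 = 0) = ∅ := by
      rw [Finset.filter_eq_empty_iff]; intro e _; omega
    rw [h2]
    simp
  · intro n k
    have := count_step (extInv n) (extInv_bij n) (invRow n) (invRow (n+1))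
      (fun e v => by rw [invRow_ext]; split <;> [left; right] <;> rfl)
      (fun e => by
        have hset : (Finset.univ.filter fun v : Fin (n+1) =>
            invRow (n+1) (extInv n e v) = invRow n e)
            = Finset.univ.filter fun v : Fin (n+1) => (v : ℕ) = 0 ∨ (v : ℕ) + 1 ∈ invROW n e := by
          ext v
          simp only [Finset.mem_filter, Finset.mem_univ, true_and]
          rw [invRow_ext]
          split <;> rename_i h
          · exact iff_of_true rfl h
          · exact iff_of_false (by omega) h
        rw [hset, invRow_kept_card]) (k+1)
    rw [this]
    have h2 : (Finset.univ.filter fun e : InvTable n => invRow n e + 1 = k + 1)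
        = (Finset.univ.filter fun e : InvTable n => invRow n e = k) := by
      apply Finset.filter_congr; intro e _; simp
    rw [h2]
    have : n + 1 - (k + 1) = n - k := by omega
    rw [this]

private lemma permDes_le (n : ℕ) (σ : Equiv.Perm (Fin n)) : permDes n σ ≤ n := by
  unfold permDes permDES
  calc ((Finset.Ico 1 n).filter _).card ≤ (Finset.Ico 1 n).card := Finset.card_filter_le _ _
    _ ≤ n := by rw [Nat.card_Ico]; omega

private lemma perm_count (n k : ℕ) :
    (Finset.univ.filter (fun π : Equiv.Perm (Fin n) => permDes n π = k)).card = EulA n k := by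
  have hzero : ∀ π : Equiv.Perm (Fin 0), permDes 0 π = 0 := by
    intro π
    unfold permDes permDES
    simp
  have hstat : ∀ (n : ℕ) (σ : Equiv.Perm (Fin n)) (p : Fin (n+1)),
      permDes (n+1) (insPerm n σ p) = permDes n σ ∨
      permDes (n+1) (insPerm n σ p) = permDes n σ + 1 := by
    intro n σ p
    rw [permDes_insPerm]
    split <;> [left; right] <;> rfl
  refine eq_eulA (fun n k => (Finset.univ.filter (fun π : Equiv.Perm (Fin n) => permDes n π = k)).card)
    ?_ ?_ ?_ ?_ n k
  · have : (Finset.univ.filter (fun π : Equiv.Perm (Fin 0) => permDes 0 π = 0)) = Finset.univ := by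
      ext π; simp [hzero π]
    show (Finset.univ.filter (fun π : Equiv.Perm (Fin 0) => permDes 0 π = 0)).card = 1
    rw [this, Finset.card_univ]
    simp
  · intro k
    rw [Finset.card_eq_zero, Finset.filter_eq_empty_iff]
    intro π _
    rw [hzero π]
    omega
  · intro n
    have := count_step (insPerm n) (insPerm_bij n) (permDes n) (permDes (n+1))
      (hstat n) (fun σ => permDes_kept_card n σ) 0
    rw [this]
    have h2 : (Finset.univ.filter fun σ : Equiv.Perm (Fin n) => permDes n σ + 1 = 0) = ∅ := by
      rw [Finset.filter_eq_empty_iff]; intro σ _; omega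
    rw [h2]
    simp
  · intro n k
    have := count_step (insPerm n) (insPerm_bij n) (permDes n) (permDes (n+1))
      (hstat n) (fun σ => permDes_kept_card n σ) (k+1)
    rw [this]
    have h2 : (Finset.univ.filter fun σ : Equiv.Perm (Fin n) => permDes n σ + 1 = k + 1)
        = (Finset.univ.filter fun σ : Equiv.Perm (Fin n) => permDes n σ = k) := by
      apply Finset.filter_congr; intro σ _; simp
    rw [h2]
    have : n + 1 - (k + 1) = n - k := by omega
    rw [this]

/-- The number of inversion tables of length `n` with `row(e) = k` equals the
number of permutations of `{1,...,n}` with `des(π) = k` (the Eulerian number). -/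
theorem row_eulerian (n : ℕ) (hn : 0 < n) (k : ℕ) :
    (Finset.univ.filter (fun e : InvTable n => invRow n e = k)).card =
    (Finset.univ.filter (fun π : Equiv.Perm (Fin n) => permDes n π = k)).card := by
  rw [inv_count, perm_count]
end

section
/- For every positive integer n and all nonnegative integers m and k, the number of permutations π of {1,...,n} with maj(π) = m equals the number of inversion tables e of length n with amaj(e) = m; that is, maj on permutations of length n is equidistributed with amaj on inversion tables of length n. -/
namespace MajAmajAux

open Finset

variable {n : ℕ}

/-- The left-inversion code of a permutation. -/
def code (π : Equiv.Perm (Fin n)) (i : Fin n) : ℕ :=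
  (Finset.univ.filter (fun j => j < i ∧ π i < π j)).card

lemma code_le (π : Equiv.Perm (Fin n)) (i : Fin n) : code π i ≤ (i : ℕ) := by
  classical
  have h : (Finset.univ.filter (fun j => j < i ∧ π i < π j)) ⊆ Finset.Iio i := by
    intro j hj
    simp only [Finset.mem_filter] at hj
    exact Finset.mem_Iio.2 hj.2.1
  simpa [Fin.card_Iio, code] using Finset.card_le_card h

lemma flip_lt (τ : Equiv.Perm (Fin n)) {a b : Fin n} (hab : a ≠ b) :
    τ a < τ b ↔ ¬ τ b < τ a := by
  have hne : τ a ≠ τ b := fun hh => hab (τ.injective hh)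
  constructor
  · exact fun h1 h2 => absurd h1 (lt_asymm h2)
  · intro h2; exact hne.lt_or_gt.resolve_right h2

lemma charP (τ : Equiv.Perm (Fin n)) (i j : Fin n) (hj : j < i) :
    τ i < τ j ↔
      (Finset.univ.filter (fun j' => j' < i ∧ τ j ≤ τ j')).card ≤
      (Finset.univ.filter (fun j' => j' < i ∧ τ i < τ j')).card := by
  classical
  constructor
  · intro hlt
    apply Finset.card_le_card
    intro x hx
    simp only [Finset.mem_filter, Finset.mem_univ, true_and] at hx ⊢
    exact ⟨hx.1, lt_of_lt_of_le hlt hx.2⟩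
  · intro hle
    by_contra hcon
    have hne : τ j ≠ τ i := fun hh => hj.ne (τ.injective hh)
    have hlt : τ j < τ i := lt_of_le_of_ne (not_lt.1 hcon) hne
    have hsub : (Finset.univ.filter (fun j' => j' < i ∧ τ i < τ j')) ⊆
        (Finset.univ.filter (fun j' => j' < i ∧ τ j ≤ τ j')) := by
      intro x hx
      simp only [Finset.mem_filter, Finset.mem_univ, true_and] at hx ⊢
      exact ⟨hx.1, le_of_lt (hlt.trans hx.2)⟩
    have hss : (Finset.univ.filter (fun j' => j' < i ∧ τ i < τ j')) ⊂
        (Finset.univ.filter (fun j' => j' < i ∧ τ j ≤ τ j')) := by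
      refine (Finset.ssubset_iff_of_subset hsub).2 ⟨j, ?_, ?_⟩
      · simp only [Finset.mem_filter, Finset.mem_univ, true_and]
        exact ⟨hj, le_refl _⟩
      · simp only [Finset.mem_filter, Finset.mem_univ, true_and, not_and]
        exact fun _ => not_lt.2 hlt.le
    exact absurd hle (not_le.2 (Finset.card_lt_card hss))

lemma key_aux (π σ : Equiv.Perm (Fin n)) (h : ∀ i, code π i = code σ i) :
    ∀ N : ℕ, ∀ i : Fin n, (i : ℕ) < N → ∀ j, j < i → (π j < π i ↔ σ j < σ i) := by
  classical
  intro N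
  induction N with
  | zero => intro i hi; omega
  | succ N IH =>
    intro i hi j hj
    have cross : ∀ a b : Fin n, a < i → b < i → (π a < π b ↔ σ a < σ b) := by
      intro a b ha hb
      rcases lt_trichotomy a b with hab | rfl | hab
      · exact IH b (by omega) a hab
      · simp
      · have h1 := IH a (by omega) b hab
        rw [flip_lt π hab.ne', flip_lt σ hab.ne', h1]
    have crossle : ∀ a b : Fin n, a < i → b < i → (π a ≤ π b ↔ σ a ≤ σ b) := by
      intro a b ha hb
      rw [← not_lt, ← not_lt, cross b a hb ha]
    have efilter : (Finset.univ.filter (fun j' => j' < i ∧ π j ≤ π j')) =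
        (Finset.univ.filter (fun j' => j' < i ∧ σ j ≤ σ j')) := by
      apply Finset.filter_congr
      intro x _
      exact and_congr_right fun hx => crossle j x hj hx
    have h1 := charP π i j hj
    have h2 := charP σ i j hj
    have hcode : (Finset.univ.filter (fun j' => j' < i ∧ π i < π j')).card =
        (Finset.univ.filter (fun j' => j' < i ∧ σ i < σ j')).card := h i
    rw [flip_lt π hj.ne, flip_lt σ hj.ne, h1, h2, efilter, hcode]

lemma code_inj (π σ : Equiv.Perm (Fin n)) (h : ∀ i, code π i = code σ i) : π = σ := by
  have key : ∀ i j : Fin n, j < i → (π j < π i ↔ σ j < σ i) :=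
    fun i j hj => key_aux π σ h ((i : ℕ) + 1) i (by omega) j hj
  have all : ∀ a b : Fin n, π a < π b ↔ σ a < σ b := by
    intro a b
    rcases lt_trichotomy a b with hab | rfl | hab
    · exact key b a hab
    · simp
    · rw [flip_lt π hab.ne', flip_lt σ hab.ne', key a b hab]
  have hm : StrictMono (fun a => σ (π.symm a)) := by
    intro a b hab
    exact (all (π.symm a) (π.symm b)).1 (by simpa using hab)
  have hrange : Set.range (fun a => σ (π.symm a)) = Set.range (id : Fin n → Fin n) := by
    rw [Set.range_id]
    exact Set.range_eq_univ.2 fun b => ⟨π (σ.symm b), by simp⟩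
  have hid : (fun a => σ (π.symm a)) = id := (StrictMono.range_inj hm (strictMono_id : StrictMono (id : Fin n → Fin n))).1 hrange
  apply Equiv.ext
  intro a
  have := congrFun hid (π a)
  simpa using this.symm


/-! Auxiliary: the map from permutations to inversion tables. -/

def toInv (π : Equiv.Perm (Fin n)) : InvTable n :=
  ⟨fun i => ⟨code π i + 1, by have h1 := code_le π i; have h2 := i.isLt; omega⟩,
   fun i => by
     have h1 := code_le π i
     simp only [Fin.val_mk]
     omega⟩

lemma toInv_injective : Function.Injective (toInv (n := n)) := by
  intro π σ h
  apply code_inj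
  intro i
  have := congrFun (congrArg Subtype.val h) i
  have h2 := congrArg Fin.val this
  simp only [toInv, Fin.val_mk] at h2
  omega

/-- the main step: descents correspond to ascents of the code. -/
lemma step (π : Equiv.Perm (Fin n)) (k k' : Fin n) (hk : (k' : ℕ) + 1 = (k : ℕ)) :
    π k < π k' ↔ code π k' < code π k := by
  classical
  have hk'k : k' < k := by rw [Fin.lt_iff_val_lt_val]; omega
  constructor
  · intro hlt
    have hnotmem : k' ∉ Finset.univ.filter (fun j => j < k' ∧ π k' < π j) := by
      simp
    have hsub : insert k' (Finset.univ.filter (fun j => j < k' ∧ π k' < π j)) ⊆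
        Finset.univ.filter (fun j => j < k ∧ π k < π j) := by
      intro x hx
      rcases Finset.mem_insert.1 hx with rfl | hx
      · simp only [Finset.mem_filter, Finset.mem_univ, true_and]
        exact ⟨hk'k, hlt⟩
      · simp only [Finset.mem_filter, Finset.mem_univ, true_and] at hx ⊢
        exact ⟨hx.1.trans hk'k, hlt.trans hx.2⟩
    have := Finset.card_le_card hsub
    rw [Finset.card_insert_of_notMem hnotmem] at this
    unfold code
    omega
  · intro hcard
    by_contra hcon
    have hne : π k ≠ π k' := fun hh => hk'k.ne' (π.injective hh)
    have hlt : π k' < π k := lt_of_le_of_ne (not_lt.1 hcon) (Ne.symm hne)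
    have hsub : Finset.univ.filter (fun j => j < k ∧ π k < π j) ⊆
        Finset.univ.filter (fun j => j < k' ∧ π k' < π j) := by
      intro x hx
      simp only [Finset.mem_filter, Finset.mem_univ, true_and] at hx ⊢
      have hxne : x ≠ k' := by
        intro rfl'
        subst rfl'
        exact absurd (hlt.trans hx.2) (lt_irrefl _)
      have hxlt : x < k' := by
        rw [Fin.lt_iff_val_lt_val] at hx ⊢
        have : (x : ℕ) ≠ (k' : ℕ) := fun hh => hxne (Fin.ext hh)
        omega
      exact ⟨hxlt, hlt.trans hx.2⟩
    exact absurd (Finset.card_le_card hsub) (not_le.2 hcard)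

lemma invASC_toInv (π : Equiv.Perm (Fin n)) : invASC n (toInv π) = permDES n π := by
  classical
  unfold invASC permDES
  apply Finset.filter_congr
  intro i hi
  rw [Finset.mem_Ico] at hi
  have hin : i < n := hi.2
  have hin' : i - 1 < n := by omega
  constructor
  · rintro ⟨h, h', hlt⟩
    refine ⟨hin, hin', ?_⟩
    simp only [toInv, Fin.val_mk] at hlt
    have := (step π ⟨i, hin⟩ ⟨i - 1, hin'⟩ (by simp; omega)).2 (by omega)
    exact this
  · rintro ⟨h, h', hlt⟩
    refine ⟨hin, hin', ?_⟩
    simp only [toInv, Fin.val_mk]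
    have := (step π ⟨i, hin⟩ ⟨i - 1, hin'⟩ (by simp; omega)).1 hlt
    omega

lemma invAmaj_toInv (π : Equiv.Perm (Fin n)) : invAmaj n (toInv π) = permMaj n π := by
  unfold invAmaj permMaj
  rw [invASC_toInv]

/-- `InvTable n` is equivalent to a dependent product. -/
def invEquivPi : InvTable n ≃ ((i : Fin n) → Fin ((i : ℕ) + 1)) where
  toFun e i := ⟨(e.1 i : ℕ) - 1, by have := e.2 i; omega⟩
  invFun g := ⟨fun i => ⟨(g i : ℕ) + 1, by have := (g i).isLt; have := i.isLt; omega⟩,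
    fun i => by have := (g i).isLt; simp only [Fin.val_mk]; omega⟩
  left_inv e := by
    apply Subtype.ext
    funext i
    apply Fin.ext
    have := e.2 i
    simp only [Fin.val_mk]
    omega
  right_inv g := by
    funext i
    apply Fin.ext
    simp

lemma card_invTable : Fintype.card (InvTable n) = Nat.factorial n := by
  rw [Fintype.card_congr (invEquivPi (n := n))]
  rw [Fintype.card_pi]
  have : ∀ i : Fin n, Fintype.card (Fin ((i : ℕ) + 1)) = (i : ℕ) + 1 := fun i => Fintype.card_fin _
  calc (∏ i : Fin n, Fintype.card (Fin ((i : ℕ) + 1)))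
      = ∏ i : Fin n, ((i : ℕ) + 1) := by simp
    _ = ∏ i ∈ Finset.range n, (i + 1) := Fin.prod_univ_eq_prod_range _ _
    _ = Nat.factorial n := Finset.prod_range_add_one_eq_factorial n

lemma toInv_bijective : Function.Bijective (toInv (n := n)) := by
  rw [Fintype.bijective_iff_injective_and_card]
  refine ⟨toInv_injective, ?_⟩
  rw [card_invTable, Fintype.card_perm, Fintype.card_fin]

end MajAmajAux

/-- `maj` on permutations of length `n` is equidistributed with `amaj` on
inversion tables of length `n`. -/
theorem maj_equidistributed_amaj (n : ℕ) (hn : 0 < n) (m : ℕ) :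
    (Finset.univ.filter (fun π : Equiv.Perm (Fin n) => permMaj n π = m)).card =
    (Finset.univ.filter (fun e : InvTable n => invAmaj n e = m)).card := by
  classical
  rw [← Fintype.card_subtype, ← Fintype.card_subtype]
  exact Fintype.card_congr
    ((Equiv.ofBijective _ MajAmajAux.toInv_bijective).subtypeEquiv
      (fun π => by rw [Equiv.ofBijective_apply, MajAmajAux.invAmaj_toInv]))
end

section
/- For all nonnegative integers r, s, p, t with p ≤ r, the number of (r+1)-tuples (x_0, x_1, ..., x_r) of nonnegative integers satisfying ∑_{i=0}^{r} x_i = s and ∑_{i=0}^{p} (x_i - 1)_+ + ∑_{i=p+1}^{r} x_i = t equals binom(p+1, s-t) · binom(r+s-p-1, t). -/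
open Finset

/-- Number of functions on a fintype with fixed sum (stars and bars). -/
lemma count_funs_sum (α : Type*) [Fintype α] [DecidableEq α] (t : ℕ) :
    Nat.card {f : α → ℕ // ∑ i, f i = t} = (Fintype.card α + t - 1).choose t := by
  set e : (α → ℕ) ≃ Multiset α :=
    Finsupp.equivFunOnFinite.symm.trans Multiset.toFinsupp.symm.toEquiv with hedef
  have hcount : ∀ (f : α → ℕ) (a : α), (e f).count a = f a := by
    intro f a
    calc (e f).count a
        = Multiset.toFinsupp (e f) a := (Multiset.toFinsupp_apply _ _).symm
      _ = f a := by
          have he : e f = (Multiset.toFinsupp (α := α)).symm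
              (Finsupp.equivFunOnFinite.symm f) := by
            rw [hedef]; rfl
          rw [he, AddEquiv.apply_symm_apply]
          rfl
  have hcard : ∀ f : α → ℕ, Multiset.card (e f) = ∑ i, f i := by
    intro f
    have h1 : Multiset.card (e f) = ∑ a ∈ (e f).toFinset, (e f).count a :=
      (Multiset.toFinset_sum_count_eq (e f)).symm
    rw [h1, Finset.sum_subset (Finset.subset_univ _)]
    · exact Finset.sum_congr rfl fun a _ => hcount f a
    · intro a _ ha
      exact Multiset.count_eq_zero_of_notMem (by simpa using ha)
  have e' : {f : α → ℕ // ∑ i, f i = t} ≃ Sym α t :=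
    Equiv.subtypeEquiv e (fun f => by rw [← hcard f])
  rw [Nat.card_congr e', Nat.card_eq_fintype_card, Sym.card_sym_eq_choose]

/-- Stars and bars for functions vanishing outside a finset `C`. -/
lemma count_funs_sum_support (α : Type*) [Fintype α] [DecidableEq α] (C : Finset α) (t : ℕ) :
    Nat.card {f : α → ℕ // (∀ i ∉ C, f i = 0) ∧ ∑ i, f i = t} =
      (C.card + t - 1).choose t := by
  have e : {f : α → ℕ // (∀ i ∉ C, f i = 0) ∧ ∑ i, f i = t} ≃
      {g : {x // x ∈ C} → ℕ // ∑ j, g j = t} := by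
    refine ⟨fun f => ⟨fun j => f.1 j.1, ?_⟩,
      fun g => ⟨fun i => if h : i ∈ C then g.1 ⟨i, h⟩ else 0, ?_, ?_⟩, ?_, ?_⟩
    · obtain ⟨f, hf0, hfs⟩ := f
      have : ∑ j : {x // x ∈ C}, f j.1 = ∑ i ∈ C, f i := Finset.sum_coe_sort C f
      rw [this, ← hfs]
      exact Finset.sum_subset (Finset.subset_univ _) (fun i _ hi => hf0 i hi)
    · intro i hi; simp [hi]
    · obtain ⟨g, hg⟩ := g
      show (∑ i : α, if h : i ∈ C then g ⟨i, h⟩ else 0) = t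
      calc (∑ i : α, if h : i ∈ C then g ⟨i, h⟩ else 0)
          = ∑ i ∈ C, (if h : i ∈ C then g ⟨i, h⟩ else 0) :=
            (Finset.sum_subset (Finset.subset_univ C) (fun i _ hi => dif_neg hi)).symm
        _ = ∑ j ∈ C.attach, (if h : (j : α) ∈ C then g ⟨j, h⟩ else 0) :=
            (Finset.sum_attach C _).symm
        _ = ∑ j : {x // x ∈ C}, g j := by
            rw [← Finset.univ_eq_attach]
            exact Finset.sum_congr rfl fun j _ => by rw [dif_pos j.2]
        _ = t := hg
    · rintro ⟨f, hf0, hfs⟩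
      ext i
      by_cases hi : i ∈ C <;> simp [hi, hf0 i]
    · rintro ⟨g, hg⟩
      ext j
      simp [j.2]
  rw [Nat.card_congr e, count_funs_sum, Fintype.card_coe]

/-- Counting tuples with fixed sum vanishing on a given finset `D`. -/
lemma count_tuples_vanishing (n t : ℕ) (D : Finset (Fin n)) :
    ((Finset.Nat.antidiagonalTuple n t).filter fun y => ∀ i ∈ D, y i = 0).card =
      (n - D.card + t - 1).choose t := by
  classical
  have hset : (((Finset.Nat.antidiagonalTuple n t).filter fun y => ∀ i ∈ D, y i = 0) :
      Set (Fin n → ℕ)) = {y : Fin n → ℕ | (∀ i ∉ Dᶜ, y i = 0) ∧ ∑ i, y i = t} := by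
    ext y
    simp [Finset.Nat.mem_antidiagonalTuple, and_comm]
  have h1 : ((Finset.Nat.antidiagonalTuple n t).filter fun y => ∀ i ∈ D, y i = 0).card
      = Nat.card {y : Fin n → ℕ // (∀ i ∉ Dᶜ, y i = 0) ∧ ∑ i, y i = t} := by
    rw [← Set.ncard_coe_finset, hset, ← Nat.card_coe_set_eq]
    rfl
  rw [h1, count_funs_sum_support, Finset.card_compl, Fintype.card_fin]

/-- For nonnegative integers `r, s, p, t` with `p ≤ r`, the number of
`(r+1)`-tuples `(x_0, ..., x_r)` of nonnegative integers with
`∑ x_i = s` and `∑_{i=0}^{p} (x_i - 1)_+ + ∑_{i=p+1}^{r} x_i = t` equals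
`binom(p+1, s-t) * binom(r+s-p-1, t)`, where the first factor is interpreted
as `0` when `s - t` would be negative (i.e. `t > s`).  Note that for natural
numbers, truncated subtraction gives `x_i - 1 = (x_i - 1)_+`. -/
theorem count_tuples_binomial (r s p t : ℕ) (hpr : p ≤ r) :
    {x : Fin (r + 1) → ℕ |
        (∑ i, x i) = s ∧
        (∑ i : Fin (r + 1), if (i : ℕ) ≤ p then x i - 1 else x i) = t}.ncard =
    (if t ≤ s then Nat.choose (p + 1) (s - t) else 0) *
      Nat.choose (r + s - p - 1) t := by
  classical
  set A : Finset (Fin (r + 1)) := univ.filter (fun i => (i : ℕ) ≤ p) with hAdef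
  have hmemA : ∀ i : Fin (r + 1), i ∈ A ↔ (i : ℕ) ≤ p := fun i => by simp [hAdef]
  have hA : A.card = p + 1 := by
    have : A = Finset.Iic (⟨p, by omega⟩ : Fin (r + 1)) := by
      ext i; simp [hAdef, Fin.le_def]
    rw [this, Fin.card_Iic]
  -- key splitting identity
  have hsplit : ∀ x : Fin (r + 1) → ℕ,
      ∑ i, x i = (∑ i : Fin (r + 1), if (i : ℕ) ≤ p then x i - 1 else x i) +
        (A.filter fun i => 1 ≤ x i).card := by
    intro x
    have h1 : (A.filter fun i => 1 ≤ x i) =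
        univ.filter (fun i : Fin (r + 1) => (i : ℕ) ≤ p ∧ 1 ≤ x i) := by
      ext i
      simp only [Finset.mem_filter, hmemA i, Finset.mem_univ, true_and]
    rw [h1, Finset.card_filter, ← Finset.sum_add_distrib]
    refine Finset.sum_congr rfl fun i _ => ?_
    split_ifs <;> omega
  by_cases hts : t ≤ s
  · -- main case
    set k := s - t with hk
    set F : Finset (Fin (r + 1) → ℕ) :=
      (Finset.Nat.antidiagonalTuple (r + 1) s).filter
        (fun x => (∑ i : Fin (r + 1), if (i : ℕ) ≤ p then x i - 1 else x i) = t) with hFdef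
    have hmemF : ∀ x : Fin (r + 1) → ℕ, x ∈ F ↔
        (∑ i, x i) = s ∧
          (∑ i : Fin (r + 1), if (i : ℕ) ≤ p then x i - 1 else x i) = t := fun x => by
      rw [hFdef, Finset.mem_filter, Finset.Nat.mem_antidiagonalTuple]
    have hLHS : {x : Fin (r + 1) → ℕ |
        (∑ i, x i) = s ∧
        (∑ i : Fin (r + 1), if (i : ℕ) ≤ p then x i - 1 else x i) = t} = ↑F := by
      ext x; rw [Set.mem_setOf_eq, Finset.mem_coe, hmemF]
    rw [hLHS, Set.ncard_coe_finset]
    set G : Finset (Finset (Fin (r + 1)) × (Fin (r + 1) → ℕ)) :=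
      ((A.powersetCard k) ×ˢ (Finset.Nat.antidiagonalTuple (r + 1) t)).filter
        (fun q => ∀ i ∈ A \ q.1, q.2 i = 0) with hGdef
    have hmemG : ∀ (S : Finset (Fin (r + 1))) (y : Fin (r + 1) → ℕ),
        (S, y) ∈ G ↔ (S ⊆ A ∧ S.card = k) ∧ (∑ i, y i = t) ∧
          (∀ i ∈ A \ S, y i = 0) := by
      intro S y
      rw [hGdef, Finset.mem_filter, Finset.mem_product]
      dsimp only
      rw [Finset.mem_powersetCard, Finset.Nat.mem_antidiagonalTuple, and_assoc]
    have hFG : F.card = G.card := by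
      refine Finset.card_bij'
        (fun x _ => (A.filter fun i => 1 ≤ x i,
          fun i : Fin (r + 1) => if (i : ℕ) ≤ p then x i - 1 else x i))
        (fun q _ => fun i : Fin (r + 1) => if i ∈ q.1 then q.2 i + 1 else q.2 i) ?_ ?_ ?_ ?_
      · -- forward membership
        intro x hx
        obtain ⟨hxs, hxt⟩ := (hmemF x).1 hx
        have hcard : (A.filter fun i => 1 ≤ x i).card = k := by
          have := hsplit x; rw [hxs, hxt] at this; omega
        rw [hmemG]
        refine ⟨⟨Finset.filter_subset _ _, hcard⟩, hxt, ?_⟩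
        intro i hi
        obtain ⟨hiA, hiS⟩ := Finset.mem_sdiff.1 hi
        have h1 : (i : ℕ) ≤ p := (hmemA i).1 hiA
        have h2 : ¬ 1 ≤ x i := fun h => hiS (Finset.mem_filter.2 ⟨hiA, h⟩)
        rw [if_pos h1]; omega
      · -- backward membership
        rintro ⟨S, y⟩ hq
        obtain ⟨⟨hSA, hScard⟩, hyt, hy0⟩ := (hmemG S y).1 hq
        rw [hmemF]
        have hsum : ∑ i : Fin (r + 1), (if i ∈ S then y i + 1 else y i)
            = (∑ i, y i) + S.card := by
          have hpt : ∀ i : Fin (r + 1), (if i ∈ S then y i + 1 else y i)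
              = y i + (if i ∈ S then 1 else 0) := by
            intro i; split_ifs <;> ring
          rw [Finset.sum_congr rfl fun i _ => hpt i, Finset.sum_add_distrib,
            ← Finset.card_filter]
          congr 2
          ext i; simp
        have hpoint : ∀ i : Fin (r + 1),
            (if (i : ℕ) ≤ p then (if i ∈ S then y i + 1 else y i) - 1
              else (if i ∈ S then y i + 1 else y i)) = y i := by
          intro i
          by_cases hiS : i ∈ S
          · have hip : (i : ℕ) ≤ p := (hmemA i).1 (hSA hiS)
            rw [if_pos hip, if_pos hiS]; omega
          · by_cases hip : (i : ℕ) ≤ p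
            · have hiA : i ∈ A := (hmemA i).2 hip
              have h0 := hy0 i (Finset.mem_sdiff.2 ⟨hiA, hiS⟩)
              rw [if_pos hip, if_neg hiS, h0]
            · rw [if_neg hip, if_neg hiS]
        constructor
        · rw [hsum, hyt, hScard]; omega
        · rw [Finset.sum_congr rfl fun i _ => hpoint i]; exact hyt
      · -- left inverse
        intro x hx
        funext i
        dsimp only
        by_cases hiS : i ∈ A.filter fun j => 1 ≤ x j
        · obtain ⟨hiA, h1x⟩ := Finset.mem_filter.1 hiS
          have hip : (i : ℕ) ≤ p := (hmemA i).1 hiA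
          rw [if_pos hiS, if_pos hip]
          omega
        · rw [if_neg hiS]
          by_cases hip : (i : ℕ) ≤ p
          · have hiA : i ∈ A := (hmemA i).2 hip
            have h2 : ¬ 1 ≤ x i := fun h => hiS (Finset.mem_filter.2 ⟨hiA, h⟩)
            rw [if_pos hip]; omega
          · rw [if_neg hip]
      · -- right inverse
        rintro ⟨S, y⟩ hq
        obtain ⟨⟨hSA, hScard⟩, hyt, hy0⟩ := (hmemG S y).1 hq
        dsimp only
        have hfst : (A.filter fun i => 1 ≤ (if i ∈ S then y i + 1 else y i)) = S := by
          ext i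
          rw [Finset.mem_filter]
          constructor
          · rintro ⟨hiA, hi1⟩
            by_contra hiS
            have h0 := hy0 i (Finset.mem_sdiff.2 ⟨hiA, hiS⟩)
            rw [if_neg hiS, h0] at hi1
            omega
          · intro hiS
            refine ⟨hSA hiS, ?_⟩
            rw [if_pos hiS]; omega
        have hsnd : (fun i : Fin (r + 1) =>
            if (i : ℕ) ≤ p then (if i ∈ S then y i + 1 else y i) - 1
              else (if i ∈ S then y i + 1 else y i)) = y := by
          funext i
          by_cases hiS : i ∈ S
          · have hip : (i : ℕ) ≤ p := (hmemA i).1 (hSA hiS)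
            rw [if_pos hip, if_pos hiS]; omega
          · by_cases hip : (i : ℕ) ≤ p
            · have hiA : i ∈ A := (hmemA i).2 hip
              have h0 := hy0 i (Finset.mem_sdiff.2 ⟨hiA, hiS⟩)
              rw [if_pos hip, if_neg hiS, h0]
            · rw [if_neg hip, if_neg hiS]
        exact Prod.ext hfst hsnd
    -- count G fiberwise
    have hGcount : G.card = (A.powersetCard k).card * (r + s - p - 1).choose t := by
      rw [Finset.card_eq_sum_card_fiberwise (f := Prod.fst) (t := A.powersetCard k)
        (fun q hq => by
          rw [hGdef, Finset.mem_coe, Finset.mem_filter, Finset.mem_product] at hq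
          exact hq.1.1)]
      rw [Finset.sum_congr rfl (fun S hS => ?_), Finset.sum_const, smul_eq_mul]
      rw [Finset.mem_powersetCard] at hS
      obtain ⟨hSA, hScard⟩ := hS
      have hfiber : (G.filter fun q => q.1 = S) =
          {S} ×ˢ ((Finset.Nat.antidiagonalTuple (r + 1) t).filter
            (fun y => ∀ i ∈ A \ S, y i = 0)) := by
        ext ⟨T, y⟩
        rw [Finset.mem_filter, hmemG T y, Finset.mem_product, Finset.mem_singleton,
          Finset.mem_filter, Finset.Nat.mem_antidiagonalTuple]
        dsimp only
        constructor
        · rintro ⟨⟨_, hy, h0⟩, rfl⟩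
          exact ⟨rfl, hy, h0⟩
        · rintro ⟨rfl, hy, h0⟩
          exact ⟨⟨⟨hSA, hScard⟩, hy, h0⟩, rfl⟩
      rw [hfiber, Finset.card_product, Finset.card_singleton, one_mul,
        count_tuples_vanishing]
      congr 1
      have hDS : (A \ S).card = p + 1 - k := by
        rw [Finset.card_sdiff_of_subset hSA, hA, hScard]
      rw [hDS]
      have hkp : k ≤ p + 1 := by rw [← hScard, ← hA]; exact Finset.card_le_card hSA
      omega
    rw [hFG, hGcount, Finset.card_powersetCard, hA, if_pos hts]
  · -- t > s : the set is empty
    have hempty : {x : Fin (r + 1) → ℕ |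
        (∑ i, x i) = s ∧
        (∑ i : Fin (r + 1), if (i : ℕ) ≤ p then x i - 1 else x i) = t} = ∅ := by
      ext x
      simp only [Set.mem_setOf_eq, Set.mem_empty_iff_false, iff_false]
      rintro ⟨hxs, hxt⟩
      have h := hsplit x
      rw [hxs, hxt] at h
      omega
    rw [hempty, Set.ncard_empty, if_neg hts, zero_mul]
end

section
/- For all nonnegative integers r, s, p, t with p ≤ r, the number of (r+1)-tuples (x_0, x_1, ..., x_r) of nonnegative integers satisfying ∑_{i=0}^{r} x_i = s and ∑_{i=0}^{p} (x_i - 1)_+ + ∑_{i=p+1}^{r} x_i = t equals the number of subsets T of {1,...,r+s} with #T = s and #(T ∩ {p+2, p+3, ..., r+s}) = t. -/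
open Finset

lemma card_finset_sym {α : Type*} [DecidableEq α] (Q : Finset α) (n : ℕ) :
    (Q.sym n).card = (Q.card + n - 1).choose n := by
  classical
  have himg : Q.sym n = (univ : Finset (Sym {x // x ∈ Q} n)).image (Sym.map Subtype.val) := by
    ext m
    simp only [mem_image, mem_univ, true_and, mem_sym_iff]
    constructor
    · intro hm
      refine ⟨⟨m.1.pmap (fun a ha => (⟨a, ha⟩ : {x // x ∈ Q})) (fun a ha => hm a ?_), by
        rw [Multiset.card_pmap]; exact m.2⟩, ?_⟩
      · exact ha
      · ext : 1
        simp only [Sym.map, Sym.val_eq_coe]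
        show Multiset.map Subtype.val (m.1.pmap _ _) = m.1
        rw [Multiset.map_pmap]
        simp [Multiset.pmap_eq_map]
    · rintro ⟨m', rfl⟩ a ha
      simp only [Sym.mem_map] at ha
      obtain ⟨b, _, rfl⟩ := ha
      exact b.2
  rw [himg, card_image_of_injective _ (Sym.map_injective Subtype.val_injective _),
    card_univ, Sym.card_sym_eq_choose, Fintype.card_coe]

lemma card_piAntidiag {α : Type*} [DecidableEq α] (Q : Finset α) (n : ℕ) :
    (Q.piAntidiag n).card = (n + Q.card - 1).choose n := by
  classical
  rw [← map_sym_eq_piAntidiag, card_map, card_finset_sym, Nat.add_comm]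

lemma card_filter_pos_piAntidiag {α : Type*} [DecidableEq α] (Q S : Finset α) (n : ℕ)
    [DecidablePred fun x : α → ℕ => ∀ i ∈ S, x i ≠ 0]
    (hSQ : S ⊆ Q) (hk : S.card ≤ n) :
    ((Q.piAntidiag n).filter (fun x => ∀ i ∈ S, x i ≠ 0)).card
      = (Q.piAntidiag (n - S.card)).card := by
  classical
  apply Finset.card_nbij' (i := fun x j => x j - (if j ∈ S then 1 else 0))
    (j := fun y j => y j + (if j ∈ S then 1 else 0))
  · intro x hx
    simp only [mem_coe, mem_filter, mem_piAntidiag] at hx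
    obtain ⟨⟨hsum, hsupp⟩, hpos⟩ := hx
    simp only [mem_coe, mem_piAntidiag]
    constructor
    · rw [Finset.sum_tsub_distrib _ (fun j hj => ?_), hsum]
      · congr 1
        rw [Finset.sum_ite_mem, Finset.inter_eq_right.mpr hSQ, Finset.sum_const, smul_eq_mul,
          mul_one]
      · split_ifs with h
        · exact Nat.one_le_iff_ne_zero.mpr (hpos j h)
        · exact Nat.zero_le _
    · intro i hi
      exact hsupp i (fun h0 => hi (by simp [h0]))
  · intro y hy
    simp only [mem_coe, mem_piAntidiag] at hy
    obtain ⟨hsum, hsupp⟩ := hy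
    simp only [mem_coe, mem_filter, mem_piAntidiag]
    refine ⟨⟨?_, ?_⟩, ?_⟩
    · rw [Finset.sum_add_distrib, hsum, Finset.sum_ite_mem, Finset.inter_eq_right.mpr hSQ,
        Finset.sum_const, smul_eq_mul, mul_one]
      omega
    · intro i hi
      rcases Nat.eq_zero_or_pos (y i) with h0 | h0
      · simp only [h0, zero_add, ne_eq] at hi
        by_contra hiQ
        apply hi
        split_ifs with h
        · exact absurd (hSQ h) hiQ
        · rfl
      · exact hsupp i (by omega)
    · intro i hi
      simp [hi]
  · intro x hx
    simp only [mem_coe, mem_filter, mem_piAntidiag] at hx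
    funext j
    by_cases h : j ∈ S
    · have := hx.2 j h
      simp only [if_pos h]
      omega
    · simp [h]
  · intro y hy
    funext j
    by_cases h : j ∈ S <;> simp [h]

lemma rhs_card_aux (r s p t : ℕ) (hpr : p ≤ r) (hts : t ≤ s) :
    ((Finset.Icc 1 (r + s)).powerset.filter
      (fun T => T.card = s ∧ (T ∩ Finset.Icc (p + 2) (r + s)).card = t)).card =
    (((Icc 1 (r + s)) \ (Icc (p + 2) (r + s))).card).choose (s - t)
      * ((Icc (p + 2) (r + s) : Finset ℕ).card).choose t := by
  classical
  set I : Finset ℕ := Icc 1 (r + s) with hI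
  set J : Finset ℕ := Icc (p + 2) (r + s) with hJ
  set K : Finset ℕ := I \ J with hK
  have hJI : J ⊆ I := Icc_subset_Icc (by omega) le_rfl
  have hcard : (I.powerset.filter (fun T => T.card = s ∧ (T ∩ J).card = t)).card
      = ((K.powersetCard (s - t)) ×ˢ (J.powersetCard t)).card := by
    apply Finset.card_nbij' (i := fun T => (T \ J, T ∩ J)) (j := fun q => q.1 ∪ q.2)
    · intro T hT
      simp only [mem_coe, mem_filter, mem_powerset] at hT
      obtain ⟨hTI, hTs, hTt⟩ := hT
      have h1 := card_inter_add_card_sdiff T J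
      simp only [mem_coe, mem_product, mem_powersetCard]
      exact ⟨⟨sdiff_subset_sdiff hTI le_rfl, by omega⟩, ⟨inter_subset_right, hTt⟩⟩
    · rintro ⟨A, B⟩ hAB
      simp only [mem_coe, mem_product, mem_powersetCard] at hAB
      obtain ⟨⟨hAK, hAc⟩, hBJ, hBc⟩ := hAB
      have hdisj : Disjoint A B := by
        refine Finset.disjoint_left.mpr fun a haA haB => ?_
        have := hAK haA
        rw [hK, mem_sdiff] at this
        exact this.2 (hBJ haB)
      have hAJ : A ∩ J = ∅ := by
        refine Finset.eq_empty_of_forall_notMem fun a ha => ?_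
        rw [mem_inter] at ha
        have := hAK ha.1
        rw [hK, mem_sdiff] at this
        exact this.2 ha.2
      simp only [mem_coe, mem_filter, mem_powerset]
      refine ⟨union_subset (hAK.trans sdiff_subset) (hBJ.trans hJI), ?_, ?_⟩
      · rw [card_union_of_disjoint hdisj]; omega
      · rw [union_inter_distrib_right, hAJ, inter_eq_left.mpr hBJ, empty_union]
        exact hBc
    · intro T hT
      exact sdiff_union_inter T J
    · rintro ⟨A, B⟩ hAB
      simp only [mem_coe, mem_product, mem_powersetCard] at hAB
      obtain ⟨⟨hAK, hAc⟩, hBJ, hBc⟩ := hAB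
      have hAJ : A \ J = A := by
        rw [Finset.sdiff_eq_self_iff_disjoint]
        refine Finset.disjoint_left.mpr fun a haA haB => ?_
        have := hAK haA
        rw [hK, mem_sdiff] at this
        exact this.2 haB
      have hAJ2 : A ∩ J = ∅ := by
        refine Finset.eq_empty_of_forall_notMem fun a ha => ?_
        rw [mem_inter] at ha
        have := hAK ha.1
        rw [hK, mem_sdiff] at this
        exact this.2 ha.2
      have hBJ2 : B \ J = ∅ := sdiff_eq_empty_iff_subset.mpr hBJ
      ext1
      · show (A ∪ B) \ J = A
        rw [union_sdiff_distrib, hAJ, hBJ2, union_empty]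
      · show (A ∪ B) ∩ J = B
        rw [union_inter_distrib_right, hAJ2, inter_eq_left.mpr hBJ, empty_union]
    
  rw [hcard, card_product, card_powersetCard, card_powersetCard]

/-- For nonnegative integers `r, s, p, t` with `p ≤ r`, the number of
`(r+1)`-tuples `(x_0, ..., x_r)` of nonnegative integers with `∑ x_i = s` and
`∑_{i=0}^{p} (x_i - 1)_+ + ∑_{i=p+1}^{r} x_i = t` equals the number of subsets
`T ⊆ {1,...,r+s}` with `#T = s` and `#(T ∩ {p+2,...,r+s}) = t`.  Note that for
natural numbers, truncated subtraction gives `x_i - 1 = (x_i - 1)_+`. -/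
theorem count_tuples_eq_count_subsets (r s p t : ℕ) (hpr : p ≤ r) :
    {x : Fin (r + 1) → ℕ |
        (∑ i, x i) = s ∧
        (∑ i : Fin (r + 1), if (i : ℕ) ≤ p then x i - 1 else x i) = t}.ncard =
    ((Finset.Icc 1 (r + s)).powerset.filter
      (fun T => T.card = s ∧ (T ∩ Finset.Icc (p + 2) (r + s)).card = t)).card := by
  classical
  set X : Finset (Fin (r + 1) → ℕ) :=
    ((univ : Finset (Fin (r + 1))).piAntidiag s).filter
      (fun x => (∑ i : Fin (r + 1), if (i : ℕ) ≤ p then x i - 1 else x i) = t) with hX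
  have hset : {x : Fin (r + 1) → ℕ |
        (∑ i, x i) = s ∧
        (∑ i : Fin (r + 1), if (i : ℕ) ≤ p then x i - 1 else x i) = t} = ↑X := by
    ext x
    simp [hX, mem_piAntidiag]
  rw [hset, Set.ncard_coe_finset]
  by_cases hts : t ≤ s
  · -- main case
    set k := s - t with hk
    set P : Finset (Fin (r + 1)) := univ.filter (fun i => (i : ℕ) ≤ p) with hP
    have hPcard : P.card = p + 1 := by
      have : P = Iic (⟨p, by omega⟩ : Fin (r + 1)) := by
        ext i
        simp [hP, Fin.le_def]
      rw [this, Fin.card_Iic]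
    -- the condition rewrite
    have hcond : ∀ x : Fin (r + 1) → ℕ, (∑ i, x i) = s →
        (((∑ i : Fin (r + 1), if (i : ℕ) ≤ p then x i - 1 else x i) = t) ↔
          (P.filter (fun i => x i ≠ 0)).card = k) := by
      intro x hx
      have h1 : (∑ i : Fin (r + 1), if (i : ℕ) ≤ p then x i - 1 else x i)
          = ∑ i : Fin (r + 1), (x i - if (i : ℕ) ≤ p ∧ x i ≠ 0 then 1 else 0) := by
        refine Finset.sum_congr rfl fun i _ => ?_
        by_cases hip : (i : ℕ) ≤ p
        · by_cases h0 : x i = 0 <;> simp [hip, h0]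
        · simp [hip]
      have h2 : (∑ i : Fin (r + 1), (x i - if (i : ℕ) ≤ p ∧ x i ≠ 0 then 1 else 0))
          = s - (P.filter (fun i => x i ≠ 0)).card := by
        rw [Finset.sum_tsub_distrib _ (fun i _ => ?_), hx]
        · congr 1
          rw [Finset.sum_ite, Finset.sum_const, Finset.sum_const]
          simp only [smul_eq_mul, mul_one, mul_zero, add_zero]
          congr 1
          ext i
          simp [hP]
        · split_ifs with h
          · omega
          · exact Nat.zero_le _
      have h3 : (P.filter (fun i => x i ≠ 0)).card ≤ s := by
        calc (P.filter (fun i => x i ≠ 0)).card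
            = ∑ i ∈ P.filter (fun i => x i ≠ 0), 1 := by simp
          _ ≤ ∑ i ∈ P.filter (fun i => x i ≠ 0), x i := by
              refine Finset.sum_le_sum fun i hi => ?_
              simp only [mem_filter] at hi
              omega
          _ ≤ ∑ i, x i := Finset.sum_le_sum_of_subset (subset_univ _)
          _ = s := hx
      rw [h1, h2]
      omega
    -- fiberwise counting
    have hmem : ∀ x ∈ X, P.filter (fun i => x i ≠ 0) ∈ P.powersetCard k := by
      intro x hx
      simp only [hX, mem_filter, mem_piAntidiag, mem_univ, implies_true, and_true] at hx
      rw [mem_powersetCard]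
      exact ⟨filter_subset _ _, (hcond x hx.1).mp hx.2⟩
    rw [Finset.card_eq_sum_card_fiberwise hmem]
    -- each fiber
    have hfiber : ∀ S ∈ P.powersetCard k,
        (X.filter (fun x => P.filter (fun i => x i ≠ 0) = S)).card
          = (t + (k + (r - p)) - 1).choose t := by
      intro S hS
      rw [mem_powersetCard] at hS
      obtain ⟨hSP, hSk⟩ := hS
      set Q : Finset (Fin (r + 1)) := S ∪ (univ \ P) with hQ
      have hSQ : S ⊆ Q := subset_union_left
      have hQcard : Q.card = k + (r - p) := by
        rw [hQ, card_union_of_disjoint, hSk, card_sdiff_of_subset (subset_univ _), hPcard]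
        · congr 1
          simp only [card_univ, Fintype.card_fin]
          omega
        · refine Finset.disjoint_left.mpr fun a ha ha' => ?_
          rw [mem_sdiff] at ha'
          exact ha'.2 (hSP ha)
      have hfib_eq : X.filter (fun x => P.filter (fun i => x i ≠ 0) = S)
          = (Q.piAntidiag s).filter (fun x => ∀ i ∈ S, x i ≠ 0) := by
        ext x
        simp only [hX, mem_filter, mem_piAntidiag, mem_univ, implies_true, and_true]
        constructor
        · rintro ⟨⟨hsum, hcondt⟩, hfib⟩
          have hsupp : ∀ i, x i ≠ 0 → i ∈ Q := by
            intro i hi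
            rw [hQ, mem_union, mem_sdiff]
            by_cases hiP : i ∈ P
            · left; rw [← hfib, mem_filter]; exact ⟨hiP, hi⟩
            · right; exact ⟨mem_univ _, hiP⟩
          refine ⟨⟨?_, hsupp⟩, ?_⟩
          · rw [← hsum]
            exact Finset.sum_subset (subset_univ _) (fun i _ hi => by
              by_contra h0
              exact hi (hsupp i h0))
          · intro i hi
            rw [← hfib, mem_filter] at hi
            exact hi.2
        · rintro ⟨⟨hsumQ, hsupp⟩, hpos⟩
          have hfib : P.filter (fun i => x i ≠ 0) = S := by
            ext i
            simp only [mem_filter]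
            constructor
            · rintro ⟨hiP, hi0⟩
              have := hsupp i hi0
              rw [hQ, mem_union, mem_sdiff] at this
              rcases this with h | h
              · exact h
              · exact absurd hiP h.2
            · intro hiS
              exact ⟨hSP hiS, hpos i hiS⟩
          have hsum : ∑ i, x i = s := by
            rw [← hsumQ]
            exact (Finset.sum_subset (subset_univ _) (fun i _ hi => by
              by_contra h0
              exact hi (hsupp i h0))).symm
          refine ⟨⟨hsum, ?_⟩, hfib⟩
          rw [hcond x hsum, hfib, hSk]
      rw [hfib_eq]
      refine (card_filter_pos_piAntidiag Q S s hSQ (by omega)).trans ?_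
      rw [hSk, card_piAntidiag, hQcard]
      congr 1 <;> omega
    rw [Finset.sum_congr rfl hfiber, Finset.sum_const, card_powersetCard, hPcard, smul_eq_mul]
    rw [rhs_card_aux r s p t hpr hts]
    -- final arithmetic
    have hJc : (Icc (p + 2) (r + s) : Finset ℕ).card = r + s - p - 1 := by
      rw [Nat.card_Icc]; omega
    have hKc : ((Icc 1 (r + s)) \ (Icc (p + 2) (r + s)) : Finset ℕ).card
        = (r + s) - (r + s - p - 1) := by
      rw [card_sdiff_of_subset (Icc_subset_Icc (by omega) le_rfl), Nat.card_Icc, Nat.card_Icc]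
      omega
    rw [hJc, hKc]
    by_cases hrs : p + 1 ≤ r + s
    · have e1 : (r + s) - (r + s - p - 1) = p + 1 := by omega
      have e2 : t + (k + (r - p)) - 1 = r + s - p - 1 := by omega
      rw [e1, e2]
    · have hs0 : s = 0 ∧ p = r := by omega
      obtain ⟨hs0, hpr'⟩ := hs0
      have ht0 : t = 0 := by omega
      have hk0 : k = 0 := by omega
      subst hs0 hpr' ht0
      simp [hk0]
  · -- t > s : both sides are zero
    have hX0 : X = ∅ := by
      rw [Finset.eq_empty_iff_forall_notMem]
      intro x hx
      simp only [hX, mem_filter, mem_piAntidiag, mem_univ, implies_true, and_true] at hx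
      obtain ⟨hsum, hcondt⟩ := hx
      have hsum' : (∑ i, x i) = s := hsum
      have : (∑ i : Fin (r + 1), if (i : ℕ) ≤ p then x i - 1 else x i) ≤ ∑ i, x i :=
        Finset.sum_le_sum fun i _ => by split_ifs <;> omega
      omega
    have hR0 : ((Finset.Icc 1 (r + s)).powerset.filter
        (fun T => T.card = s ∧ (T ∩ Finset.Icc (p + 2) (r + s)).card = t)) = ∅ := by
      rw [Finset.eq_empty_iff_forall_notMem]
      intro T hT
      simp only [mem_filter, mem_powerset] at hT
      obtain ⟨hTI, hTs, hTt⟩ := hT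
      have : (T ∩ Finset.Icc (p + 2) (r + s)).card ≤ T.card :=
        card_le_card inter_subset_left
      omega
    rw [hX0, hR0, card_empty, card_empty]
end
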